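/- Let V be an oriented 2-dimensional real inner product space with rotation j by π/2, T a finite-dimensional real inner product space, and B_v : T → W linear maps (linear in v) satisfying ᵗB_v ∘ B_{jv} = ᵗB_{jv} ∘ B_v and ᵗB_v ∘ B_v + ᵗB_{jv} ∘ B_{jv} = Id for all unit vectors v. Fix a unit vector v₁ and let v = cos θ · v₁ + sin θ · j v₁ with 0 < θ < π. Then for every X ∈ ker B_v and Y ∈ ker B_{v₁} one has ⟨X, Y⟩ = 0; that is, ker B_v is orthogonal to ker B_{v₁}. -/

import Mathlib

open LinearMap

/-- With `B₁ = B_{v₁}`, `B₂ = B_{j v₁}` and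
`B_v = cos θ • B₁ + sin θ • B₂` for `v = cos θ • v₁ + sin θ • j v₁`, under the Lagrangian
and isometry conditions for all unit vectors, if `0 < θ < π` then
`ker B_v ⊥ ker B_{v₁}`. -/
theorem stmt1 {T W : Type*}
    [NormedAddCommGroup T] [InnerProductSpace ℝ T] [FiniteDimensional ℝ T]
    [NormedAddCommGroup W] [InnerProductSpace ℝ W] [FiniteDimensional ℝ W]
    (B₁ B₂ : T →ₗ[ℝ] W)
    (hLag : ∀ θ : ℝ,
      (adjoint (Real.cos θ • B₁ + Real.sin θ • B₂)) ∘ₗ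
          ((-Real.sin θ) • B₁ + Real.cos θ • B₂)
        = (adjoint ((-Real.sin θ) • B₁ + Real.cos θ • B₂)) ∘ₗ
          (Real.cos θ • B₁ + Real.sin θ • B₂))
    (hIso : ∀ θ : ℝ,
      (adjoint (Real.cos θ • B₁ + Real.sin θ • B₂)) ∘ₗ
          (Real.cos θ • B₁ + Real.sin θ • B₂)
        + (adjoint ((-Real.sin θ) • B₁ + Real.cos θ • B₂)) ∘ₗ
          ((-Real.sin θ) • B₁ + Real.cos θ • B₂)
        = LinearMap.id) :
    ∀ θ : ℝ, 0 < θ → θ < Real.pi →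
      ∀ X Y : T, (Real.cos θ • B₁ + Real.sin θ • B₂) X = 0 → B₁ Y = 0 →
        (inner ℝ X Y : ℝ) = 0 := by
  intro θ hθ hθπ X Y hX hY
  set Bθ : T →ₗ[ℝ] W := Real.cos θ • B₁ + Real.sin θ • B₂ with hBθ
  set Cθ : T →ₗ[ℝ] W := (-Real.sin θ) • B₁ + Real.cos θ • B₂ with hCθ
  have hsin : Real.sin θ ≠ 0 := ne_of_gt (Real.sin_pos_of_pos_of_lt_pi hθ hθπ)
  have hXdec : adjoint Bθ (Bθ X) + adjoint Cθ (Cθ X) = X := by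
    have := congrArg (fun f => f X) (hIso θ)
    simpa [hBθ, hCθ] using this
  have hYrel : Real.sin θ • Cθ Y = Real.cos θ • Bθ Y := by
    simp only [hBθ, hCθ, LinearMap.add_apply, LinearMap.smul_apply, hY, smul_zero,
      zero_add, add_zero, smul_add, smul_smul]
    ring_nf
  have hLag' : (inner ℝ (Cθ X) (Bθ Y) : ℝ) = inner ℝ (Bθ X) (Cθ Y) := by
    have h1 := congrArg (fun f => (inner ℝ (f X) Y : ℝ)) (hLag θ)
    simp only [LinearMap.comp_apply] at h1
    rw [adjoint_inner_left, adjoint_inner_left, ← hBθ, ← hCθ] at h1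
    exact h1
  have hCC : (inner ℝ (Cθ X) (Cθ Y) : ℝ) = 0 := by
    have : Real.sin θ * (inner ℝ (Cθ X) (Cθ Y) : ℝ)
        = Real.cos θ * (inner ℝ (Bθ X) (Cθ Y) : ℝ) := by
      rw [← real_inner_smul_right, hYrel, real_inner_smul_right, hLag']
    rw [hX] at this
    simp only [inner_zero_left, mul_zero] at this
    exact (mul_eq_zero.mp this).resolve_left hsin
  calc (inner ℝ X Y : ℝ) = inner ℝ (adjoint Bθ (Bθ X) + adjoint Cθ (Cθ X)) Y := by
        rw [hXdec]
    _ = inner ℝ (Bθ X) (Bθ Y) + inner ℝ (Cθ X) (Cθ Y) := by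
        rw [inner_add_left, adjoint_inner_left, adjoint_inner_left]
    _ = 0 := by rw [hX, hCC]; simp
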